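/- Let X' be a partition of a finite set X with closed partition model M, and let P be a probability distribution on X. Define Q* by Q*(x) = P(X^x)/|X^x| for all x ∈ X, where P(X^x) = ∑_{y∈X^x} P(y). Then Q* ∈ M, D(P‖Q*) ≤ D(P‖Q) for every Q ∈ M, and D(P‖Q*) = ∑_{x∈X, P(x)>0} P(x)·log( P(x)·|X^x| / P(X^x) ). -/

import Mathlib

open scoped BigOperators Classical

noncomputable section

variable {X : Type*}

/-- A probability distribution on a finite set `X`. -/
def IsProb [Fintype X] (P : X → ℝ) : Prop :=
  (∀ x, 0 ≤ P x) ∧ ∑ x, P x = 1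

/-- Information divergence `D(P‖Q)` with values in `EReal`, equal to `⊤` if the
support of `P` is not contained in the support of `Q`.  (The convention
`0 · log 0 = 0` holds automatically since `Real.log 0 = 0`.) -/
def KL [Fintype X] (P Q : X → ℝ) : EReal :=
  if ∀ x, Q x = 0 → P x = 0 then ((∑ x, P x * Real.log (P x / Q x) : ℝ) : EReal) else ⊤

/-- The exponential family with strictly positive reference measure `ν` and extended
tangent space `T` (a subspace of `ℝ^X` containing the constants): the set of strictly
positive probability distributions `P` with `log (P/ν) ∈ T`. -/
def expFam [Fintype X] (ν : X → ℝ) (T : Submodule ℝ (X → ℝ)) : Set (X → ℝ) :=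
  {P | (∀ x, 0 < P x) ∧ ∑ x, P x = 1 ∧ (fun x => Real.log (P x / ν x)) ∈ T}

/-- `sup_P inf_{Q ∈ E} D(P‖Q)`, supremum over all probability distributions `P`. -/
def maxDiv [Fintype X] (E : Set (X → ℝ)) : EReal :=
  ⨆ P ∈ {P : X → ℝ | IsProb P}, ⨅ Q ∈ E, KL P Q

/-- The orthogonal complement of `T` in `ℝ^X` w.r.t. the standard inner product
(the normal space of the exponential family with extended tangent space `T`). -/
def orthSpace [Fintype X] (T : Submodule ℝ (X → ℝ)) : Set (X → ℝ) :=
  {u | ∀ t ∈ T, ∑ x, u x * t x = 0}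

/-- A circuit vector of a set `N ⊆ ℝ^X`: a nonzero element whose support is minimal,
i.e. every `u ∈ N` with `supp u ⊆ supp v` is a scalar multiple of `v`. -/
def IsCircuitVector (N : Set (X → ℝ)) (v : X → ℝ) : Prop :=
  v ∈ N ∧ v ≠ 0 ∧ ∀ u ∈ N, Function.support u ⊆ Function.support v → ∃ α : ℝ, u = α • v

/-- A circuit of `N`: the support of a circuit vector. -/
def IsCircuit (N : Set (X → ℝ)) (σ : Set X) : Prop :=
  ∃ v, IsCircuitVector N v ∧ σ = Function.support v

/-- The closed partition model of the partition given by the equivalence relation `r`: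
all probability distributions constant on each block. -/
def partModel [Fintype X] (r : X → X → Prop) : Set (X → ℝ) :=
  {Q | IsProb Q ∧ ∀ x y, r x y → Q x = Q y}

/-- The partition exponential family of the partition given by the equivalence
relation `r`: all strictly positive probability distributions constant on each block. -/
def partExpFam [Fintype X] (r : X → X → Prop) : Set (X → ℝ) :=
  {P | (∀ x, 0 < P x) ∧ ∑ x, P x = 1 ∧ ∀ x y, r x y → P x = P y}

/-- The set `X̲` of points not annihilated by all of `N`. -/
def underlineSet (N : Set (X → ℝ)) : Set X := {x | ∃ v ∈ N, v x ≠ 0}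

/-- The relation `x ∼ y` : every `v ∈ N` with `v x ≠ 0` has `v y ≠ 0`. -/
def coRel (N : Set (X → ℝ)) (x y : X) : Prop := ∀ v ∈ N, v x ≠ 0 → v y ≠ 0

/-- `Z` is an equivalence class of `∼` on `X̲`. -/
def IsClassOf (N : Set (X → ℝ)) (Z : Set X) : Prop :=
  ∃ x ∈ underlineSet N, Z = {y | coRel N x y}

end

/-- the rI-projection to a partition model (partition given by the
equivalence relation `r`, block of `x` being `{y | r x y}`) averages over the blocks,
and the divergence from the model has the stated explicit form. -/
lemma block_eq {X : Type*} {r : X → X → Prop} (hr : Equivalence r) {x y : X} (hxy : r x y) :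
    {z | r x z} = {z | r y z} := by
  ext z
  exact ⟨fun h => hr.trans (hr.symm hxy) h, fun h => hr.trans hxy h⟩

lemma swap_sum {X : Type*} [Fintype X] {r : X → X → Prop} (hr : Equivalence r) (h : X → ℝ) :
    ∑ x, (∑ y ∈ {y | r x y}.toFinset, h y) / ({y | r x y}.ncard : ℝ) = ∑ y, h y := by
  classical
  have hcard : ∀ x : X, {y | r x y}.toFinset.card = {y | r x y}.ncard :=
    fun x => (Set.ncard_eq_toFinset_card' _).symm
  have hNpos : ∀ x : X, (0:ℝ) < ({y | r x y}.ncard : ℝ) := by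
    intro x
    exact_mod_cast (Set.ncard_pos (Set.toFinite _)).mpr ⟨x, hr.refl x⟩
  calc ∑ x, (∑ y ∈ {y | r x y}.toFinset, h y) / (({y | r x y}.ncard : ℝ))
      = ∑ x, ∑ y, (if r x y then h y / ({z | r x z}.ncard : ℝ) else 0) := by
        refine Finset.sum_congr rfl fun x _ => ?_
        have hfin : {y | r x y}.toFinset = Finset.univ.filter (fun y => r x y) := by
          ext z; simp
        rw [Finset.sum_div, hfin, Finset.sum_filter]
    _ = ∑ y, ∑ x, (if r x y then h y / ({z | r x z}.ncard : ℝ) else 0) := Finset.sum_comm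
    _ = ∑ y, h y := by
        refine Finset.sum_congr rfl fun y _ => ?_
        have step : ∀ x : X, (if r x y then h y / ({z | r x z}.ncard : ℝ) else 0)
            = (if r x y then h y / ({z | r y z}.ncard : ℝ) else 0) := by
          intro x; by_cases hxy : r x y
          · simp [hxy, block_eq hr hxy]
          · simp [hxy]
        rw [Finset.sum_congr rfl (fun x _ => step x), ← Finset.sum_filter]
        have hfin : (Finset.univ.filter (fun x => r x y)) = {z | r y z}.toFinset := by
          ext z; simp only [Finset.mem_filter, Finset.mem_univ, true_and, Set.mem_toFinset,
            Set.mem_setOf_eq]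
          exact ⟨fun hz => hr.symm hz, fun hz => hr.symm hz⟩
        rw [Finset.sum_const, hfin, hcard y, nsmul_eq_mul,
          mul_div_cancel₀ _ (ne_of_gt (hNpos y))]

theorem stmt3 (X : Type*) [Fintype X] [Nonempty X]
    (r : X → X → Prop) (hr : Equivalence r)
    (P : X → ℝ) (hP : IsProb P) (Qstar : X → ℝ)
    (hQstar : ∀ x, Qstar x = (∑ y ∈ {y | r x y}.toFinset, P y) / ({y | r x y}.ncard : ℝ)) :
    Qstar ∈ partModel r ∧
    (∀ Q ∈ partModel r, KL P Qstar ≤ KL P Q) ∧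
    KL P Qstar = ((∑ x ∈ Finset.univ.filter (fun x => 0 < P x),
        P x * Real.log (P x * ({y | r x y}.ncard : ℝ) / (∑ y ∈ {y | r x y}.toFinset, P y)) : ℝ) : EReal) := by
  classical
  obtain ⟨hPnn, hPsum⟩ := hP
  set S : X → ℝ := fun x => ∑ y ∈ {y | r x y}.toFinset, P y with hSdef
  set N : X → ℝ := fun x => ({y | r x y}.ncard : ℝ) with hNdef
  have hNpos : ∀ x : X, 0 < N x := by
    intro x
    show (0:ℝ) < (({y | r x y}.ncard : ℕ) : ℝ)
    exact_mod_cast (Set.ncard_pos (Set.toFinite _)).mpr ⟨x, hr.refl x⟩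
  have hQx : ∀ x, Qstar x = S x / N x := hQstar
  have hblockS : ∀ {a b : X}, r a b → S a = S b := by
    intro a b hab
    show ∑ y ∈ {z | r a z}.toFinset, P y = ∑ y ∈ {z | r b z}.toFinset, P y
    rw [Set.toFinset_congr (block_eq hr hab)]
  have hblockN : ∀ {a b : X}, r a b → N a = N b := by
    intro a b hab
    show (({z | r a z}.ncard : ℕ) : ℝ) = (({z | r b z}.ncard : ℕ) : ℝ)
    rw [block_eq hr hab]
  have hSnn : ∀ x, 0 ≤ S x := fun x => Finset.sum_nonneg fun y _ => hPnn y
  have hxmem : ∀ x : X, x ∈ {y | r x y}.toFinset := fun x => Set.mem_toFinset.mpr (hr.refl x)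
  have hxS : ∀ x, P x ≤ S x := fun x =>
    Finset.single_le_sum (fun y _ => hPnn y) (hxmem x)
  have hS0 : ∀ x, S x = 0 → P x = 0 := fun x hx =>
    le_antisymm (hx ▸ hxS x) (hPnn x)
  have hsupp : ∀ x, Qstar x = 0 → P x = 0 := by
    intro x hx
    rw [hQx x] at hx
    rcases div_eq_zero_iff.mp hx with h | h
    · exact hS0 x h
    · exact absurd h (ne_of_gt (hNpos x))
  have hQsum : ∑ x, Qstar x = 1 := by
    calc ∑ x, Qstar x = ∑ x, (∑ y ∈ {y | r x y}.toFinset, P y) / ({y | r x y}.ncard : ℝ) :=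
          Finset.sum_congr rfl fun x _ => hQstar x
      _ = ∑ x, P x := swap_sum hr P
      _ = 1 := hPsum
  refine ⟨⟨⟨fun x => ?_, hQsum⟩, fun x y hxy => ?_⟩, ?_, ?_⟩
  · rw [hQx x]
    exact div_nonneg (hSnn x) (le_of_lt (hNpos x))
  · rw [hQx x, hQx y, hblockS hxy, hblockN hxy]
  · -- minimality
    rintro Q ⟨⟨hQnn, hQsum1⟩, hQconst⟩
    by_cases hQs : ∀ x, Q x = 0 → P x = 0
    · rw [KL, if_pos hsupp, KL, if_pos hQs]
      rw [EReal.coe_le_coe_iff]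
      -- key pointwise bound
      have hQstarpos : ∀ x, 0 < P x → 0 < Qstar x := by
        intro x hx
        rw [hQx x]
        exact div_pos (lt_of_lt_of_le hx (hxS x)) (hNpos x)
      have key : ∀ x, P x - P x * Q x / Qstar x ≤
          P x * Real.log (P x / Q x) - P x * Real.log (P x / Qstar x) := by
        intro x
        rcases eq_or_lt_of_le (hPnn x) with h0 | hpos
        · simp [← h0]
        · have hQpos : 0 < Q x := by
            rcases eq_or_lt_of_le (hQnn x) with h | h
            · exact absurd (hQs x h.symm) (ne_of_gt hpos)
            · exact h
          have hQsp := hQstarpos x hpos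
          have hlog : 1 - Q x / Qstar x ≤ Real.log (Qstar x / Q x) := by
            have := Real.log_le_sub_one_of_pos (div_pos hQpos hQsp)
            have hrev : Real.log (Qstar x / Q x) = - Real.log (Q x / Qstar x) := by
              rw [← Real.log_inv, inv_div]
            linarith
          have heq : P x * Real.log (P x / Q x) - P x * Real.log (P x / Qstar x)
              = P x * Real.log (Qstar x / Q x) := by
            rw [← mul_sub, Real.log_div (ne_of_gt hpos) (ne_of_gt hQpos),
              Real.log_div (ne_of_gt hpos) (ne_of_gt hQsp),
              Real.log_div (ne_of_gt hQsp) (ne_of_gt hQpos)]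
            ring
          rw [heq]
          have := mul_le_mul_of_nonneg_left hlog (le_of_lt hpos)
          calc P x - P x * Q x / Qstar x = P x * (1 - Q x / Qstar x) := by ring
            _ ≤ P x * Real.log (Qstar x / Q x) := this
      -- the grouped bound  ∑ P x Q x / Qstar x ≤ 1
      have eq1 : ∀ x, P x * Q x / Qstar x = Q x * (P x * N x / S x) := by
        intro x
        rw [hQx x]
        by_cases hSx : S x = 0
        · rw [hS0 x hSx, hSx]; simp
        · rw [div_div_eq_mul_div]
          field_simp
      have hterm : ∀ x : X,
          (∑ y ∈ {y | r x y}.toFinset, Q y * (P y * N y / S y)) / ({y | r x y}.ncard : ℝ)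
            ≤ Q x := by
        intro x
        have hconst : ∀ y ∈ {y | r x y}.toFinset,
            Q y * (P y * N y / S y) = Q x * (P y * N x / S x) := by
          intro y hy
          rw [Set.mem_toFinset] at hy
          rw [← hQconst x y hy, ← hblockN hy, ← hblockS hy]
        rw [Finset.sum_congr rfl hconst]
        have hNx : ({y | r x y}.ncard : ℝ) = N x := rfl
        rw [hNx]
        by_cases hSx : S x = 0
        · simp [hSx]
          exact hQnn x
        · rw [← Finset.mul_sum]
          have hsum : ∑ y ∈ {y | r x y}.toFinset, P y * N x / S x = N x := by
            rw [← Finset.sum_div, ← Finset.sum_mul]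
            have : ∑ y ∈ {y | r x y}.toFinset, P y = S x := rfl
            rw [this, mul_comm, mul_div_assoc, div_self hSx, mul_one]
          rw [hsum, mul_div_assoc, div_self (ne_of_gt (hNpos x)), mul_one]
      have sum2 : ∑ x, P x * Q x / Qstar x ≤ 1 := by
        calc ∑ x, P x * Q x / Qstar x = ∑ x, Q x * (P x * N x / S x) :=
              Finset.sum_congr rfl fun x _ => eq1 x
          _ = ∑ x, (∑ y ∈ {y | r x y}.toFinset, Q y * (P y * N y / S y)) /
                ({y | r x y}.ncard : ℝ) := (swap_sum hr _).symm
          _ ≤ ∑ x, Q x := Finset.sum_le_sum fun x _ => hterm x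
          _ = 1 := hQsum1
      have hsum := Finset.sum_le_sum (fun x (_ : x ∈ Finset.univ) => key x)
      rw [Finset.sum_sub_distrib, Finset.sum_sub_distrib, hPsum] at hsum
      linarith
    · simp only [KL, if_neg hQs]
      exact le_top
  · -- explicit formula
    rw [KL, if_pos hsupp]
    norm_cast
    rw [← Finset.sum_filter_of_ne (p := fun x => 0 < P x)
      (by
        intro x _ hne
        rcases eq_or_lt_of_le (hPnn x) with h0 | hpos
        · exact absurd (by simp [← h0]) hne
        · exact hpos)]
    refine Finset.sum_congr rfl fun x hx => ?_
    rw [hQstar x, div_div_eq_mul_div]
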